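/- Fix real k_s, k_m, k_ℓ with k_m ≥ 0 and set 𝛂 = k_s + k_ℓ − 1/2, 𝛃 = k_ℓ − 1/2. For every L ∈ Π_k, say arising from index i (i.e. L = w·{(ξ_1,…,ξ_i, √−1 t_{i+1},…,√−1 t_r) : t ∈ ℝ^{r−i}} with ξ ∈ D_k(Θ_i), w ∈ W), there exists a polynomial p_L ∈ ℂ[λ_1,…,λ_r] such that p_L(z) ≠ 0 for every z ∈ L, while p_L vanishes identically on every L' ∈ Π_k with L' ≠ L arising from an index i' with i' ≥ i (equivalently, with dim L' ≤ dim L). -/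

import Mathlib

noncomputable section

/-- The set `D_k(Θ_i)` of discrete spectral parameters (for `i = 0` this is the
singleton consisting of the empty tuple). -/
def DkSet (α β km : ℝ) (i : ℕ) : Set (Fin i → ℝ) :=
  {ξ | (∀ h : 0 < i, ∃ n : ℕ, ξ ⟨0, h⟩ + |β| - α - 1 = 2 * (n : ℝ)) ∧
       (∀ h : 0 < i, ξ ⟨i - 1, by omega⟩ < 0) ∧
       (∀ j : ℕ, ∀ h : j + 1 < i,
         ∃ n : ℕ, ξ ⟨j + 1, h⟩ - ξ ⟨j, by omega⟩ - 2 * km = 2 * (n : ℝ))}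

/-- Action on `ℂ^r` of the element of the Weyl group of type `BC_r` given by the
sign vector `ε` and the permutation `σ`. -/
def wActC (r : ℕ) (ε : Fin r → ℤˣ) (σ : Equiv.Perm (Fin r)) (z : Fin r → ℂ) : Fin r → ℂ :=
  fun j => ((ε j : ℤ) : ℂ) * z (σ⁻¹ j)

/-- The set `{(ξ_1, …, ξ_i, √−1 t_{i+1}, …, √−1 t_r) : t ∈ ℝ^{r−i}} ⊆ ℂ^r`. -/
def baseSet (r i : ℕ) (ξ : Fin i → ℝ) : Set (Fin r → ℂ) :=
  {z | (∀ j : Fin r, ∀ h : (j : ℕ) < i, z j = ((ξ ⟨(j : ℕ), h⟩ : ℝ) : ℂ)) ∧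
       (∀ j : Fin r, i ≤ (j : ℕ) → (z j).re = 0)}

/-! ### Auxiliary lemmas -/

lemma dk_step {α β km : ℝ} {i : ℕ} {ξ : Fin i → ℝ} (hξ : ξ ∈ DkSet α β km i)
    (hkm : 0 ≤ km) {j : ℕ} (h : j + 1 < i) :
    ξ ⟨j, by omega⟩ ≤ ξ ⟨j + 1, h⟩ := by
  obtain ⟨n, hn⟩ := hξ.2.2 j h
  have : (0:ℝ) ≤ n := n.cast_nonneg
  linarith

lemma dk_neg {α β km : ℝ} {i : ℕ} {ξ : Fin i → ℝ} (hξ : ξ ∈ DkSet α β km i)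
    (hkm : 0 ≤ km) : ∀ j, ∀ h : j < i, ξ ⟨j, h⟩ < 0 := by
  intro j h
  have h0 : 0 < i := by omega
  have key : ∀ d j, ∀ h : j < i, j + d = i - 1 → ξ ⟨j, h⟩ ≤ ξ ⟨i - 1, by omega⟩ := by
    intro d
    induction d with
    | zero =>
      intro j h hj
      have hji : (⟨j, h⟩ : Fin i) = ⟨i - 1, by omega⟩ := by
        ext; simp; omega
      rw [hji]
    | succ d ih =>
      intro j h hj
      have h1 : j + 1 < i := by omega
      exact le_trans (dk_step hξ hkm h1) (ih (j + 1) h1 (by omega))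
  exact lt_of_le_of_lt (key (i - 1 - j) j h (by omega)) (hξ.2.1 h0)

lemma dk_repr {α β km : ℝ} {i : ℕ} {ξ : Fin i → ℝ} (hξ : ξ ∈ DkSet α β km i) :
    ∀ j, ∀ h : j < i, ∃ m : ℕ, ξ ⟨j, h⟩ = (α + 1 - |β|) + 2 * j * km + 2 * m := by
  intro j
  induction j with
  | zero =>
    intro h
    obtain ⟨n, hn⟩ := hξ.1 h
    exact ⟨n, by push_cast; linarith⟩
  | succ j ih =>
    intro h
    obtain ⟨m, hm⟩ := ih (by omega)
    obtain ⟨n, hn⟩ := hξ.2.2 j h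
    exact ⟨m + n, by push_cast; linarith⟩

def Afin (γ km : ℝ) (r N : ℕ) : Finset ℝ :=
  (Finset.range r ×ˢ Finset.range N).image (fun q => γ + 2 * q.1 * km + 2 * q.2)

lemma mem_Afin {γ km : ℝ} (hkm : 0 ≤ km) {r : ℕ} {t m : ℕ} (ht : t < r)
    (hneg : γ + 2 * t * km + 2 * m < 0) :
    γ + 2 * t * km + 2 * m ∈ Afin γ km r (⌈-γ / 2⌉₊ + 1) := by
  refine Finset.mem_image.mpr ⟨(t, m), Finset.mem_product.mpr ⟨Finset.mem_range.mpr ht,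
    Finset.mem_range.mpr ?_⟩, rfl⟩
  have h1 : (m : ℝ) < -γ / 2 := by nlinarith [Nat.cast_nonneg (α := ℝ) t]
  have h2 : (-γ / 2 : ℝ) ≤ (⌈-γ / 2⌉₊ : ℝ) := Nat.le_ceil _
  have : (m : ℝ) < ((⌈-γ / 2⌉₊ + 1 : ℕ) : ℝ) := by push_cast; linarith
  exact_mod_cast this

def cvecD (r i : ℕ) (ξ : Fin i → ℝ) (ε : Fin r → ℤˣ) (σ : Equiv.Perm (Fin r)) : Fin r → ℝ :=
  fun j => if h : ((σ⁻¹ j : Fin r) : ℕ) < i then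
    ((ε j : ℤ) : ℝ) * ξ ⟨((σ⁻¹ j : Fin r) : ℕ), h⟩ else 0

lemma eps_sqC (u : ℤˣ) : ((u : ℤ) : ℂ) * ((u : ℤ) : ℂ) = 1 := by
  rcases Int.units_eq_one_or u with h | h <;> simp [h]

lemma eps_ne (u : ℤˣ) : ((u : ℤ) : ℝ) ≠ 0 := by
  rcases Int.units_eq_one_or u with h | h <;> simp [h]

lemma cvec_ne_zero_iff {r i : ℕ} {ξ : Fin i → ℝ} (hne : ∀ j, ∀ h : j < i, ξ ⟨j, h⟩ ≠ 0)
    {ε : Fin r → ℤˣ} {σ : Equiv.Perm (Fin r)} {j : Fin r} :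
    cvecD r i ξ ε σ j ≠ 0 ↔ ((σ⁻¹ j : Fin r) : ℕ) < i := by
  unfold cvecD
  split_ifs with h
  · simp only [h, iff_true]
    exact mul_ne_zero (eps_ne _) (hne _ h)
  · simp [h]
    exact not_lt.mp h

lemma mem_iff {r i : ℕ} {ξ : Fin i → ℝ} (hne : ∀ j, ∀ h : j < i, ξ ⟨j, h⟩ ≠ 0)
    (ε : Fin r → ℤˣ) (σ : Equiv.Perm (Fin r)) (z : Fin r → ℂ) :
    z ∈ wActC r ε σ '' baseSet r i ξ ↔
      ∀ j : Fin r, (cvecD r i ξ ε σ j ≠ 0 → z j = ((cvecD r i ξ ε σ j : ℝ) : ℂ)) ∧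
        (cvecD r i ξ ε σ j = 0 → (z j).re = 0) := by
  constructor
  · rintro ⟨y, ⟨hy1, hy2⟩, rfl⟩ j
    constructor
    · intro hc
      have h := (cvec_ne_zero_iff hne).mp hc
      simp only [wActC, cvecD, dif_pos h]
      rw [hy1 _ h]
      push_cast
      ring
    · intro hc
      have h : ¬ ((σ⁻¹ j : Fin r) : ℕ) < i := fun h => ((cvec_ne_zero_iff hne).mpr h) hc
      have := hy2 (σ⁻¹ j) (by omega)
      simp [wActC, Complex.mul_re, this]
      exact this
  · intro hz
    refine ⟨fun j' => ((ε (σ j') : ℤ) : ℂ) * z (σ j'), ⟨?_, ?_⟩, ?_⟩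
    · intro j' h
      have hinv : σ⁻¹ (σ j') = j' := σ.symm_apply_apply j'
      have hcne : cvecD r i ξ ε σ (σ j') ≠ 0 := by
        rw [cvec_ne_zero_iff hne, hinv]; exact h
      have hzv := (hz (σ j')).1 hcne
      have hc : cvecD r i ξ ε σ (σ j') = ((ε (σ j') : ℤ) : ℝ) * ξ ⟨(j' : ℕ), h⟩ := by
        simp only [cvecD, hinv, dif_pos h]
      dsimp only
      rw [hzv, hc]
      push_cast
      rw [← mul_assoc, eps_sqC (ε (σ j')), one_mul]
    · intro j' h
      have hinv : σ⁻¹ (σ j') = j' := σ.symm_apply_apply j'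
      have hc0 : cvecD r i ξ ε σ (σ j') = 0 := by
        simp only [cvecD, hinv]
        rw [dif_neg (by omega)]
      have := (hz (σ j')).2 hc0
      simp [Complex.mul_re, this]
    · funext j
      simp only [wActC, show ∀ x, σ (σ⁻¹ x) = x from σ.apply_symm_apply, ← mul_assoc]
      rw [eps_sqC (ε j), one_mul]

lemma card_S {r i : ℕ} (hir : i ≤ r) (σ : Equiv.Perm (Fin r)) :
    (Finset.univ.filter fun j : Fin r => ((σ⁻¹ j : Fin r) : ℕ) < i).card = i := by
  have hT : (Finset.univ.filter fun j : Fin r => (j : ℕ) < i) =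
      (Finset.range i).attachFin (fun m hm => lt_of_lt_of_le (Finset.mem_range.mp hm) hir) := by
    ext j; simp [Finset.mem_attachFin]
  have hTc : (Finset.univ.filter fun j : Fin r => (j : ℕ) < i).card = i := by
    rw [hT, Finset.card_attachFin, Finset.card_range]
  have hS : (Finset.univ.filter fun j : Fin r => ((σ⁻¹ j : Fin r) : ℕ) < i) =
      (Finset.univ.filter fun j : Fin r => (j : ℕ) < i).image σ := by
    ext j
    simp only [Finset.mem_image, Finset.mem_filter, Finset.mem_univ, true_and]
    constructor
    · intro h; exact ⟨σ⁻¹ j, h, σ.apply_symm_apply j⟩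
    · rintro ⟨a, ha, rfl⟩; rwa [show σ⁻¹ (σ a) = a from σ.symm_apply_apply a]
  rw [hS, Finset.card_image_of_injective _ σ.injective, hTc]

theorem stmt11 (ks km kl α β : ℝ) (hα : α = ks + kl - 1 / 2) (hβ : β = kl - 1 / 2)
    (hkm : 0 ≤ km) (r : ℕ)
    (i : ℕ) (hir : i ≤ r) (ξ : Fin i → ℝ) (hξ : ξ ∈ DkSet α β km i)
    (ε : Fin r → ℤˣ) (σ : Equiv.Perm (Fin r)) :
    ∃ p : MvPolynomial (Fin r) ℂ,
      (∀ z ∈ wActC r ε σ '' baseSet r i ξ, MvPolynomial.eval z p ≠ 0) ∧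
      (∀ i' : ℕ, i ≤ i' → i' ≤ r → ∀ ξ' : Fin i' → ℝ, ξ' ∈ DkSet α β km i' →
        ∀ (ε' : Fin r → ℤˣ) (σ' : Equiv.Perm (Fin r)),
          wActC r ε' σ' '' baseSet r i' ξ' ≠ wActC r ε σ '' baseSet r i ξ →
          ∀ z ∈ wActC r ε' σ' '' baseSet r i' ξ', MvPolynomial.eval z p = 0) := by
  classical
  set γ : ℝ := α + 1 - |β| with hγ
  set N : ℕ := ⌈-γ / 2⌉₊ + 1 with hN
  set A : Finset ℝ := Afin γ km r N with hA
  set bigA : Finset ℝ := (A ∪ A.image (fun x => -x)) ∪ {0} with hbigA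
  set c : Fin r → ℝ := cvecD r i ξ ε σ with hc
  have hξne : ∀ j, ∀ h : j < i, ξ ⟨j, h⟩ ≠ 0 := fun j h => ne_of_lt (dk_neg hξ hkm j h)
  have hval : ∀ (i' : ℕ), i' ≤ r → ∀ (ξ' : Fin i' → ℝ), ξ' ∈ DkSet α β km i' →
      ∀ j, ∀ h : j < i', ξ' ⟨j, h⟩ ∈ A := by
    intro i' hi'r ξ' hξ' j h
    obtain ⟨m, hm⟩ := dk_repr hξ' j h
    have hneg := dk_neg hξ' hkm j h
    rw [hm]; rw [hm] at hneg
    exact mem_Afin hkm (by omega) hneg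
  refine ⟨∏ j : Fin r, ∏ a ∈ bigA.erase (c j),
      (MvPolynomial.X j - MvPolynomial.C ((a : ℝ) : ℂ)), ?_, ?_⟩
  all_goals
    have heval : ∀ z : Fin r → ℂ,
        MvPolynomial.eval z (∏ j : Fin r, ∏ a ∈ bigA.erase (c j),
          (MvPolynomial.X j - MvPolynomial.C ((a : ℝ) : ℂ))) =
        ∏ j : Fin r, ∏ a ∈ bigA.erase (c j), (z j - ((a : ℝ) : ℂ)) := by
      intro z
      rw [map_prod]
      refine Finset.prod_congr rfl fun j _ => ?_
      rw [map_prod]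
      refine Finset.prod_congr rfl fun a _ => ?_
      simp
  · -- non-vanishing on L
    intro z hz
    rw [heval, Finset.prod_ne_zero_iff]
    intro j _
    rw [Finset.prod_ne_zero_iff]
    intro a ha
    obtain ⟨hane, _⟩ := Finset.mem_erase.mp ha
    rw [mem_iff hξne] at hz
    by_cases h0 : c j = 0
    · have hre := (hz j).2 h0
      intro heq
      have h1 : (z j - ((a : ℝ) : ℂ)).re = 0 := by rw [heq]; simp
      rw [Complex.sub_re, hre, Complex.ofReal_re] at h1
      exact hane (by rw [h0]; linarith)
    · have hzj := (hz j).1 h0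
      rw [hzj]
      intro heq
      have : (c j : ℂ) = ((a : ℝ) : ℂ) := sub_eq_zero.mp heq
      exact hane (Complex.ofReal_injective this).symm
  · -- vanishing on the other residual subspaces
    intro i' hii' hi'r ξ' hξ' ε' σ' hneq z hz
    set c' : Fin r → ℝ := cvecD r i' ξ' ε' σ' with hc'
    have hξ'ne : ∀ j, ∀ h : j < i', ξ' ⟨j, h⟩ ≠ 0 := fun j h => ne_of_lt (dk_neg hξ' hkm j h)
    have hex : ∃ j₀ : Fin r, c' j₀ ≠ 0 ∧ c' j₀ ≠ c j₀ := by
      by_contra hcon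
      push_neg at hcon
      apply hneq
      have hS'eq : (Finset.univ.filter fun j : Fin r => c' j ≠ 0) =
          (Finset.univ.filter fun j : Fin r => ((σ'⁻¹ j : Fin r) : ℕ) < i') := by
        ext j
        simp only [Finset.mem_filter, Finset.mem_univ, true_and]
        exact cvec_ne_zero_iff hξ'ne
      have hSeq : (Finset.univ.filter fun j : Fin r => c j ≠ 0) =
          (Finset.univ.filter fun j : Fin r => ((σ⁻¹ j : Fin r) : ℕ) < i) := by
        ext j
        simp only [Finset.mem_filter, Finset.mem_univ, true_and]
        exact cvec_ne_zero_iff hξne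
      have hsub : (Finset.univ.filter fun j : Fin r => c' j ≠ 0) ⊆
          (Finset.univ.filter fun j : Fin r => c j ≠ 0) := by
        intro j hj
        simp only [Finset.mem_filter, Finset.mem_univ, true_and] at hj ⊢
        rw [← hcon j hj]; exact hj
      have hcard : (Finset.univ.filter fun j : Fin r => c j ≠ 0).card ≤
          (Finset.univ.filter fun j : Fin r => c' j ≠ 0).card := by
        rw [hS'eq, hSeq, card_S hir σ, card_S hi'r σ']
        omega
      have hfeq := Finset.eq_of_subset_of_card_le hsub hcard
      have hcc : c' = c := by
        funext j
        by_cases h0 : c' j ≠ 0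
        · exact hcon j h0
        · push_neg at h0
          rw [h0]
          by_contra hcj
          have hjS : j ∈ (Finset.univ.filter fun j : Fin r => c j ≠ 0) := by
            simp only [Finset.mem_filter, Finset.mem_univ, true_and]
            exact fun hh => hcj hh.symm
          rw [← hfeq] at hjS
          simp only [Finset.mem_filter, Finset.mem_univ, true_and] at hjS
          exact hjS h0
      ext w
      rw [mem_iff hξ'ne, mem_iff hξne]
      rw [← hc', ← hc, hcc]
    obtain ⟨j₀, hc'ne, hc'c⟩ := hex
    rw [heval]
    apply Finset.prod_eq_zero (Finset.mem_univ j₀)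
    have hbig : c' j₀ ∈ bigA := by
      have hj₀ : ((σ'⁻¹ j₀ : Fin r) : ℕ) < i' := by
        rw [hc'] at hc'ne
        exact (cvec_ne_zero_iff hξ'ne).mp hc'ne
      have hcval : c' j₀ = ((ε' j₀ : ℤ) : ℝ) * ξ' ⟨((σ'⁻¹ j₀ : Fin r) : ℕ), hj₀⟩ := by
        rw [hc']
        simp only [cvecD, dif_pos hj₀]
      have hmem : ξ' ⟨((σ'⁻¹ j₀ : Fin r) : ℕ), hj₀⟩ ∈ A := hval i' hi'r ξ' hξ' _ hj₀
      rw [hbigA]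
      rcases Int.units_eq_one_or (ε' j₀) with h | h
      · rw [hcval, h]
        simp only [Units.val_one, Int.cast_one, one_mul]
        exact Finset.mem_union_left _ (Finset.mem_union_left _ hmem)
      · rw [hcval, h]
        simp only [Units.val_neg, Units.val_one, Int.cast_neg, Int.cast_one, neg_one_mul]
        exact Finset.mem_union_left _ (Finset.mem_union_right _
          (Finset.mem_image.mpr ⟨_, hmem, rfl⟩))
    apply Finset.prod_eq_zero (Finset.mem_erase.mpr ⟨hc'c, hbig⟩)
    rw [mem_iff hξ'ne] at hz
    rw [(hz j₀).1 hc'ne, sub_self]
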